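/- Assume z ≥ 1 and w ≥ 1 (i.e., W ≠ ∅). Let h_1 ≥ 0, s_1 ∈ [1,p], l_1 > q', and d_1 ≥ υ−w be integers. Then there exist integers h ≥ h_1, s ∈ [1,p], l ≤ q, and d < υ such that h_1·m_0 + m_{s_1} + l_1·m_p + d_1·m_n = h·m_0 + m_s + l·m_p + d·m_n, and moreover either l ≤ q' or d < υ−w. -/

import Mathlib

/-- For `t ≥ 1`, the quotient `q_t` in the division `t = q_t·p + r_t` with `r_t ∈ [1,p]`. -/
def qF (p t : ℕ) : ℕ := (t - 1) / p

/-- For `t ≥ 1`, the remainder `r_t ∈ [1,p]` in the division `t = q_t·p + r_t`. -/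
def rF (p t : ℕ) : ℕ := (t - 1) % p + 1

/-- `g_t = q_t·m_p + m_{r_t}` for `t ≥ 1`, and `g_0 = 0`. -/
def gF (p : ℕ) (m : ℕ → ℕ) (t : ℕ) : ℕ :=
  if t = 0 then 0 else qF p t * m p + m (rF p t)

/-- The set of non-negative integer combinations `Σ_{i=0}^{k} a_i·m_i`. -/
def gammaGen (k : ℕ) (m : ℕ → ℕ) : Set ℕ :=
  {x | ∃ a : ℕ → ℕ, x = ∑ i ∈ Finset.range (k + 1), a i * m i}

lemma qr_char (p t k r0 : ℕ) (hp : 0 < p) (ht : t = k * p + r0 + 1) (hr0 : r0 < p) :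
    qF p t = k ∧ rF p t = r0 + 1 := by
  subst ht
  unfold qF rF
  have e : k*p + r0 + 1 - 1 = r0 + k*p := by omega
  rw [e, Nat.add_mul_div_right _ _ hp, Nat.add_mul_mod_self_right,
    Nat.div_eq_of_lt hr0, Nat.mod_eq_of_lt hr0]
  omega

lemma gF_eq (p : ℕ) (m : ℕ → ℕ) (t : ℕ) (ht : 1 ≤ t) :
    gF p m t = qF p t * m p + m (rF p t) := by
  unfold gF; rw [if_neg (by omega)]

/-- decomposition of `t ≥ 1` as `k*p + r0 + 1` with `r0 < p`. -/
lemma t_decomp (p a : ℕ) (hp : 0 < p) (ha : 1 ≤ a) :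
    ∃ k r0, r0 < p ∧ a = k * p + r0 + 1 := by
  refine ⟨(a-1)/p, (a-1)%p, Nat.mod_lt _ hp, ?_⟩
  have h2 := Nat.div_add_mod (a-1) p
  rw [Nat.mul_comm] at h2
  omega

/-- key additivity: `g_a + g_b = ε·m_0 + g_{a+b}` with `ε ∈ {0,1}`. -/
lemma gadd (p : ℕ) (hp : 1 ≤ p) (m : ℕ → ℕ) (c : ℕ)
    (harith : ∀ i ≤ p, m i = m 0 + i * c)
    (a b : ℕ) (ha : 1 ≤ a) (hb : 1 ≤ b) :
    ∃ ε ≤ 1, gF p m a + gF p m b = ε * m 0 + gF p m (a + b) := by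
  obtain ⟨qa, ra0, hra0, ha'⟩ := t_decomp p a hp ha
  obtain ⟨qb, rb0, hrb0, hb'⟩ := t_decomp p b hp hb
  obtain ⟨hqa, hra⟩ := qr_char p a qa ra0 hp ha' hra0
  obtain ⟨hqb, hrb⟩ := qr_char p b qb rb0 hp hb' hrb0
  rw [gF_eq p m a ha, gF_eq p m b hb, hqa, hra, hqb, hrb]
  by_cases hcase : ra0 + rb0 + 1 < p
  · obtain ⟨hqab, hrab⟩ := qr_char p (a+b) (qa+qb) (ra0+rb0+1) hp
      (by have e : (qa+qb)*p = qa*p + qb*p := by ring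
          omega) (by omega)
    refine ⟨1, le_refl 1, ?_⟩
    rw [gF_eq p m (a+b) (by omega), hqab, hrab,
      harith (ra0+1) (by omega), harith (rb0+1) (by omega),
      harith (ra0+rb0+1+1) (by omega)]
    ring
  · obtain ⟨j, hj, hj1, hjp⟩ : ∃ j, ra0 + rb0 + 2 = p + j ∧ 1 ≤ j ∧ j ≤ p :=
      ⟨ra0 + rb0 + 2 - p, by omega, by omega, by omega⟩
    obtain ⟨hqab, hrab⟩ := qr_char p (a+b) (qa+qb+1) (j-1) hp
      (by have e : (qa+qb+1)*p = qa*p + qb*p + p := by ring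
          omega) (by omega)
    refine ⟨0, by omega, ?_⟩
    rw [gF_eq p m (a+b) (by omega), hqab, hrab, show j-1+1 = j from by omega,
      harith (ra0+1) (by omega), harith (rb0+1) (by omega),
      harith p (le_refl p), harith j (by omega)]
    have hj' : (ra0:ℤ) + rb0 + 2 = p + j := by exact_mod_cast hj
    zify
    linear_combination ((c:ℤ)) * hj'

/-- Lemma 2: when `W ≠ ∅`, data with `l_1 > q'` and `d_1 ≥ υ−w` can be rewritten
with `l ≤ q`, `d < υ`, and moreover `l ≤ q'` or `d < υ−w`. -/
theorem stmt6
    (p n : ℕ) (hp : 1 ≤ p) (hn : n = p + 1)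
    (m : ℕ → ℕ) (c : ℕ) (hc : 1 ≤ c) (hm0 : 0 < m 0)
    (harith : ∀ i ≤ p, m i = m 0 + i * c) (hmn : 0 < m n)
    (hgcd : Finset.gcd (Finset.range (n + 1)) m = 1)
    (hminimal : ∀ j ≤ n, ¬ ∃ a : ℕ → ℕ, a j = 0 ∧
        m j = ∑ i ∈ Finset.range (n + 1), a i * m i)
    (S : Set ℕ)
    (hS : S = {γ | γ ∈ gammaGen n m ∧ ∀ δ ∈ gammaGen n m, δ + m 0 ≠ γ})
    (u : ℕ) (hu : IsLeast {t : ℕ | gF p m t ∉ S} u)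
    (v : ℕ) (hv : IsLeast {b : ℕ | 1 ≤ b ∧ b * m n ∈ gammaGen p m} v)
    (lam w mu z : ℕ) (hlam : 1 ≤ lam) (hw : w < v) (hz : z < u)
    (hgu : gF p m u = lam * m 0 + w * m n)
    (hvmn : v * m n = mu * m 0 + gF p m z)
    (q r q' r' : ℕ) (hqr : u = q * p + r) (hr : 1 ≤ r ∧ r ≤ p)
    (hq'r' : u - z = q' * p + r') (hr' : 1 ≤ r' ∧ r' ≤ p)
    (hz1 : 1 ≤ z) (hw1 : 1 ≤ w)
    (h1 s1 l1 d1 : ℕ) (hs1 : 1 ≤ s1 ∧ s1 ≤ p) (hl1 : q' < l1) (hd1 : v - w ≤ d1) :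
    ∃ h s l d : ℕ, h1 ≤ h ∧ 1 ≤ s ∧ s ≤ p ∧ l ≤ q ∧ d < v ∧
      h1 * m 0 + m s1 + l1 * m p + d1 * m n = h * m 0 + m s + l * m p + d * m n ∧
      (l ≤ q' ∨ d < v - w) := by
  have hv1 : 1 ≤ v := by omega
  have hu1 : 1 ≤ u := by omega
  -- uz = u - z, additively
  set uz := u - z with huz_def
  have huz : z + uz = u := by omega
  have huz1 : 1 ≤ uz := by omega
  -- w2 = v - w, additively
  set w2 := v - w with hw2_def
  have hw2v : w + w2 = v := by omega
  have hw2 : 1 ≤ w2 := by omega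
  -- measure weights
  set Y := w * z + u * v with hY
  set B := 2 * u * z with hB
  have hB1 : 1 ≤ B := by
    have h1' : 1 * 1 ≤ (2*u) * z := Nat.mul_le_mul (by omega) hz1
    rw [hB]; omega
  have hwzuv : w * z < u * v := by
    calc w * z < v * z := mul_lt_mul_of_pos_right hw (by omega)
      _ ≤ v * u := mul_le_mul_right (by omega) v
      _ = u * v := Nat.mul_comm v u
  -- bounds used for guards
  have hup : u ≤ q * p + p := by omega
  have huzp : uz ≤ q' * p + p := by omega
  -- cast versions of the two structural equations
  have HGU : (gF p m u : ℤ) = lam * m 0 + w * m n := by exact_mod_cast hgu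
  have HVM : ((v:ℤ)) * m n = mu * m 0 + gF p m z := by exact_mod_cast hvmn
  have key : ∀ N h t d, 1 ≤ t → d * B + t * Y ≤ N →
      ∃ h' t' d', h ≤ h' ∧ 1 ≤ t' ∧ t' ≤ q * p + p ∧ d' < v ∧
        (t' ≤ q' * p + p ∨ d' < w2) ∧
        h * m 0 + gF p m t + d * m n = h' * m 0 + gF p m t' + d' * m n := by
    intro N
    induction N using Nat.strong_induction_on with
    | _ N IH =>
      intro h t d ht hN
      by_cases hgoal : t ≤ q * p + p ∧ d < v ∧ (t ≤ q' * p + p ∨ d < w2)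
      · exact ⟨h, t, d, le_refl h, ht, hgoal.1, hgoal.2.1, hgoal.2.2, rfl⟩
      by_cases hC : q * p + p < t
      · -- Move C : replace g_t by g_{t-u} + g_u, use g_u = lam·m0 + w·mn
        obtain ⟨t2, ht2, ht21⟩ : ∃ t2, t = t2 + u ∧ 1 ≤ t2 := ⟨t - u, by omega, by omega⟩
        subst ht2
        obtain ⟨ε, hε, heq⟩ := gadd p hp m c harith t2 u ht21 hu1
        have HEQ : ((gF p m t2 : ℤ)) + gF p m u = ε * m 0 + gF p m (t2 + u) := by
          exact_mod_cast heq
        have hval : h * m 0 + gF p m (t2 + u) + d * m n =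
            (h + lam - ε) * m 0 + gF p m t2 + (d + w) * m n := by
          have hle : ε ≤ h + lam := by omega
          zify [hle]
          linear_combination HGU - HEQ
        have hkey : w * B < u * Y := by
          have h2 : u * (w * z) < u * (u * v) :=
            mul_lt_mul_of_pos_left hwzuv (by omega)
          have e3 : w * B = u * (w * z) + u * (w * z) := by rw [hB]; ring
          have e4 : u * Y = u * (w * z) + u * (u * v) := by rw [hY]; ring
          omega
        have hmeas : (d + w) * B + t2 * Y < d * B + (t2 + u) * Y := by
          have e1 : (d + w) * B = d * B + w * B := by ring
          have e2 : (t2 + u) * Y = t2 * Y + u * Y := by ring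
          omega
        obtain ⟨h', t', d', H1, H2, H3, H4, H5, H6⟩ :=
          IH _ (lt_of_lt_of_le hmeas hN) (h + lam - ε) t2 (d + w) ht21 (le_refl _)
        exact ⟨h', t', d', by omega, H2, H3, H4, H5, hval.trans H6⟩
      by_cases hBmv : v ≤ d
      · -- Move B : replace v·mn by mu·m0 + g_z, merge g_t + g_z
        obtain ⟨d2, hd2⟩ : ∃ d2, d = d2 + v := ⟨d - v, by omega⟩
        subst hd2
        obtain ⟨ε, hε, heq⟩ := gadd p hp m c harith t z ht hz1
        have HEQ : ((gF p m t : ℤ)) + gF p m z = ε * m 0 + gF p m (t + z) := by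
          exact_mod_cast heq
        have hval : h * m 0 + gF p m t + (d2 + v) * m n =
            (h + mu + ε) * m 0 + gF p m (t + z) + d2 * m n := by
          zify
          linear_combination HEQ + HVM
        have hkey : z * Y < v * B := by
          have h2 : z * (w * z) < z * (u * v) :=
            mul_lt_mul_of_pos_left hwzuv (by omega)
          have e3 : z * Y = z * (w * z) + z * (u * v) := by rw [hY]; ring
          have e4 : v * B = z * (u * v) + z * (u * v) := by rw [hB]; ring
          omega
        have hmeas : d2 * B + (t + z) * Y < (d2 + v) * B + t * Y := by
          have e1 : (d2 + v) * B = d2 * B + v * B := by ring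
          have e2 : (t + z) * Y = t * Y + z * Y := by ring
          omega
        obtain ⟨h', t', d', H1, H2, H3, H4, H5, H6⟩ :=
          IH _ (lt_of_lt_of_le hmeas hN) (h + mu + ε) (t + z) d2 (by omega) (le_refl _)
        exact ⟨h', t', d', by omega, H2, H3, H4, H5, hval.trans H6⟩
      · -- Move A : t > q'·p + p and d ≥ w2
        have hA1 : q' * p + p < t := by
          rcases not_and_or.mp hgoal with h' | h'
          · omega
          · rcases not_and_or.mp h' with h'' | h''
            · omega
            · push_neg at h''
              omega
        have hA2 : w2 ≤ d := by
          rcases not_and_or.mp hgoal with h' | h'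
          · omega
          · rcases not_and_or.mp h' with h'' | h''
            · omega
            · push_neg at h''
              omega
        obtain ⟨t2, ht2, ht21⟩ : ∃ t2, t = t2 + uz ∧ 1 ≤ t2 := ⟨t - uz, by omega, by omega⟩
        obtain ⟨d2, hd2⟩ : ∃ d2, d = d2 + w2 := ⟨d - w2, by omega⟩
        subst ht2; subst hd2
        obtain ⟨ε1, hε1, heq1⟩ := gadd p hp m c harith t2 uz ht21 huz1
        obtain ⟨ε2, hε2, heq2⟩ := gadd p hp m c harith z uz hz1 huz1
        rw [huz, hgu] at heq2
        have HEQ1 : ((gF p m t2 : ℤ)) + gF p m uz = ε1 * m 0 + gF p m (t2 + uz) := by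
          exact_mod_cast heq1
        have HEQ2 : ((gF p m z : ℤ)) + gF p m uz = ε2 * m 0 + (lam * m 0 + w * m n) := by
          exact_mod_cast heq2
        have HW2 : ((w:ℤ)) + w2 = v := by exact_mod_cast hw2v
        have hval : h * m 0 + gF p m (t2 + uz) + (d2 + w2) * m n =
            (h + lam + mu + ε2 - ε1) * m 0 + gF p m t2 + d2 * m n := by
          have hle : ε1 ≤ h + lam + mu + ε2 := by omega
          zify [hle]
          linear_combination HEQ2 + HVM + ((m n : ℤ)) * HW2 - HEQ1
        have hmeas : d2 * B + t2 * Y < (d2 + w2) * B + (t2 + uz) * Y := by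
          have e1 : d2 * B < (d2 + w2) * B :=
            mul_lt_mul_of_pos_right (by omega) (by omega)
          have e2 : t2 * Y ≤ (t2 + uz) * Y := mul_le_mul_left (by omega) Y
          omega
        obtain ⟨h', t', d', H1, H2, H3, H4, H5, H6⟩ :=
          IH _ (lt_of_lt_of_le hmeas hN) (h + lam + mu + ε2 - ε1) t2 d2 ht21 (le_refl _)
        exact ⟨h', t', d', by omega, H2, H3, H4, H5, hval.trans H6⟩
  -- apply key to the starting data
  set t1 := l1 * p + s1 with ht1_def
  have ht11 : 1 ≤ t1 := by omega
  obtain ⟨hq1, hr1⟩ := qr_char p t1 l1 (s1 - 1) (by omega) (by omega) (by omega)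
  have hg1 : gF p m t1 = l1 * m p + m s1 := by
    rw [gF_eq p m t1 ht11, hq1, hr1]
    congr 2
    omega
  obtain ⟨h', t', d', H1, H2, H3, H4, H5, H6⟩ :=
    key (d1 * B + t1 * Y) h1 t1 d1 ht11 (le_refl _)
  refine ⟨h', rF p t', qF p t', d', H1, by unfold rF; omega,
    ?_, ?_, H4, ?_, ?_⟩
  · -- rF p t' ≤ p
    have := Nat.mod_lt (t' - 1) (show 0 < p by omega)
    unfold rF
    omega
  · -- qF p t' ≤ q
    have e : (q+1)*p = q*p+p := by ring
    have : (t'-1)/p < q+1 := (Nat.div_lt_iff_lt_mul (by omega)).mpr (by omega)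
    unfold qF
    omega
  · -- the equation
    rw [hg1] at H6
    rw [gF_eq p m t' H2] at H6
    linarith [H6]
  · -- the disjunction
    rcases H5 with H5 | H5
    · left
      have e : (q'+1)*p = q'*p+p := by ring
      have : (t'-1)/p < q'+1 := (Nat.div_lt_iff_lt_mul (by omega)).mpr (by omega)
      unfold qF
      omega
    · right
      omega
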